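/- Fix a real β ∈ [0,1] and define the weight of a real x > 0 by: weight(x) = 1 if x > 1/2; weight(x) = 1/2 if 1/3 < x ≤ 1/2; and weight(x) = ((6−6β)/(4−3β))·x if x ≤ 1/3. Then for every finite list x₁,…,x_n of reals with 0 < x_i ≤ 1 for each i and ∑_{i=1}^{n} x_i ≤ 1, the total weight satisfies ∑_{i=1}^{n} weight(x_i) ≤ (14−11β)/(8−6β). -/

import Mathlib

/-- the total weight of any bin (a collection of items of positive
size at most 1, of total size at most 1) is at most `(14 - 11β)/(8 - 6β)`. -/
theorem bin_packing_weight_bound (β : ℝ) (hβ0 : 0 ≤ β) (hβ1 : β ≤ 1)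
    (weight : ℝ → ℝ)
    (hw_large : ∀ x : ℝ, 1 / 2 < x → weight x = 1)
    (hw_small : ∀ x : ℝ, 1 / 3 < x → x ≤ 1 / 2 → weight x = 1 / 2)
    (hw_tiny : ∀ x : ℝ, x ≤ 1 / 3 → weight x = (6 - 6 * β) / (4 - 3 * β) * x) :
    ∀ l : List ℝ, (∀ x ∈ l, 0 < x ∧ x ≤ 1) → l.sum ≤ 1 →
      (l.map weight).sum ≤ (14 - 11 * β) / (8 - 6 * β) := by
  intro l hpos hsum
  set d : ℝ := 4 - 3 * β with hd
  have hd0 : (0:ℝ) < d := by rw [hd]; linarith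
  set t : ℝ := (6 - 6 * β) / d with ht
  have ht0 : 0 ≤ t := div_nonneg (by linarith) hd0.le
  set pL : ℝ → Bool := fun x => decide ((1:ℝ)/2 < x) with hpL
  set pS : ℝ → Bool := fun x => decide ((1:ℝ)/3 < x ∧ x ≤ 1/2) with hpS
  -- nonstrict size lower bound
  have size_lb : ∀ m : List ℝ, (∀ x ∈ m, 0 < x) →
      (m.countP pL : ℝ)/2 + (m.countP pS : ℝ)/3 ≤ m.sum := by
    intro m hm
    induction m with
    | nil => simp
    | cons a m ih =>
      have ha : 0 < a := hm a List.mem_cons_self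
      have ih' := ih (fun x hx => hm x (List.mem_cons_of_mem a hx))
      rw [List.sum_cons, List.countP_cons, List.countP_cons]
      by_cases h1 : (1:ℝ)/2 < a
      · have e1 : pL a = true := by
          simp only [hpL, decide_eq_true_eq]; exact h1
        have e2 : pS a = false := by
          simp only [hpS, decide_eq_false_iff_not]; rintro ⟨h, h'⟩; linarith
        simp [e1, e2]; push_cast; linarith
      · by_cases h2 : (1:ℝ)/3 < a
        · have e1 : pL a = false := by
            simp only [hpL, decide_eq_false_iff_not]; exact h1
          have e2 : pS a = true := by
            simp only [hpS, decide_eq_true_eq]; exact ⟨h2, by linarith⟩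
          simp [e1, e2]; push_cast; linarith
        · have e1 : pL a = false := by
            simp only [hpL, decide_eq_false_iff_not]; exact h1
          have e2 : pS a = false := by
            simp only [hpS, decide_eq_false_iff_not]; rintro ⟨h, h'⟩; linarith
          simp [e1, e2]; linarith
  -- strict version when there is at least one large item
  have size_lb_strict : ∀ m : List ℝ, (∀ x ∈ m, 0 < x) → 1 ≤ m.countP pL →
      (m.countP pL : ℝ)/2 + (m.countP pS : ℝ)/3 < m.sum := by
    intro m hm
    induction m with
    | nil => simp
    | cons a m ih =>
      intro hL
      have ha : 0 < a := hm a List.mem_cons_self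
      have hmtail : ∀ x ∈ m, 0 < x := fun x hx => hm x (List.mem_cons_of_mem a hx)
      rw [List.sum_cons, List.countP_cons, List.countP_cons]
      by_cases h1 : (1:ℝ)/2 < a
      · have e1 : pL a = true := by
          simp only [hpL, decide_eq_true_eq]; exact h1
        have e2 : pS a = false := by
          simp only [hpS, decide_eq_false_iff_not]; rintro ⟨h, h'⟩; linarith
        have := size_lb m hmtail
        simp [e1, e2]; push_cast; linarith
      · have e1 : pL a = false := by
          simp only [hpL, decide_eq_false_iff_not]; exact h1
        have hL' : 1 ≤ m.countP pL := by
          rw [List.countP_cons, e1] at hL; simpa using hL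
        have ih' := ih hmtail hL'
        by_cases h2 : (1:ℝ)/3 < a
        · have e2 : pS a = true := by
            simp only [hpS, decide_eq_true_eq]; exact ⟨h2, by linarith⟩
          simp [e1, e2]; push_cast; linarith
        · have e2 : pS a = false := by
            simp only [hpS, decide_eq_false_iff_not]; rintro ⟨h, h'⟩; linarith
          simp [e1, e2]; linarith
  -- key weight bound
  have key : ∀ m : List ℝ, (∀ x ∈ m, 0 < x) →
      (m.map weight).sum ≤ t * m.sum + (m.countP pL : ℝ) * (1/d)
        + (m.countP pS : ℝ) * (β/(2*d)) := by
    intro m hm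
    induction m with
    | nil => simp
    | cons a m ih =>
      have ha : 0 < a := hm a List.mem_cons_self
      have ih' := ih (fun x hx => hm x (List.mem_cons_of_mem a hx))
      rw [List.map_cons, List.sum_cons, List.sum_cons, List.countP_cons,
        List.countP_cons]
      by_cases h1 : (1:ℝ)/2 < a
      · have e1 : pL a = true := by
          simp only [hpL, decide_eq_true_eq]; exact h1
        have e2 : pS a = false := by
          simp only [hpS, decide_eq_false_iff_not]; rintro ⟨h, h'⟩; linarith
        rw [hw_large a h1]
        have hident : t * (1/2) + 1/d = 1 := by
          rw [ht]; field_simp; ring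
        have hmono : t * (1/2) ≤ t * a :=
          mul_le_mul_of_nonneg_left h1.le ht0
        simp only [e1, e2, if_true, if_false, Bool.false_eq_true]
        push_cast
        linarith
      · by_cases h2 : (1:ℝ)/3 < a
        · have e1 : pL a = false := by
            simp only [hpL, decide_eq_false_iff_not]; exact h1
          have e2 : pS a = true := by
            simp only [hpS, decide_eq_true_eq]; exact ⟨h2, by linarith⟩
          rw [hw_small a h2 (by linarith)]
          have hident : t * (1/3) + β/(2*d) = 1/2 := by
            rw [ht]; field_simp; ring
          have hmono : t * (1/3) ≤ t * a :=
            mul_le_mul_of_nonneg_left h2.le ht0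
          simp only [e1, e2, if_true, if_false, Bool.false_eq_true]
          push_cast
          linarith
        · have e1 : pL a = false := by
            simp only [hpL, decide_eq_false_iff_not]; exact h1
          have e2 : pS a = false := by
            simp only [hpS, decide_eq_false_iff_not]; rintro ⟨h, h'⟩; linarith
          rw [hw_tiny a (by linarith)]
          simp only [e1, e2, if_false, Bool.false_eq_true, Nat.add_zero]
          have hexp : t * (a + m.sum) = t * a + t * m.sum := by ring
          linarith [ih']
  have hpos' : ∀ x ∈ l, 0 < x := fun x hx => (hpos x hx).1
  set L : ℕ := l.countP pL with hL
  set S : ℕ := l.countP pS with hS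
  have hcount : (L:ℝ)/2 + (S:ℝ)/3 ≤ 1 := le_trans (size_lb l hpos') hsum
  have h3L2S : 3 * L + 2 * S ≤ 6 := by
    have : (3 * L + 2 * S : ℝ) ≤ 6 := by push_cast; linarith
    exact_mod_cast this
  have hL1 : L ≤ 1 := by
    by_contra h
    push_neg at h
    have h2L : (2:ℕ) ≤ L := h
    have := size_lb_strict l hpos' (le_trans (by norm_num) h2L)
    have h2L' : (2:ℝ) ≤ (L:ℝ) := by exact_mod_cast h2L
    have hS0 : (0:ℝ) ≤ (S:ℝ) := Nat.cast_nonneg S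
    linarith
  have hkey := key l hpos'
  rw [← hL, ← hS] at hkey
  -- final arithmetic
  have hfin : t * l.sum + (L:ℝ) * (1/d) + (S:ℝ) * (β/(2*d))
      ≤ (14 - 11 * β) / (8 - 6 * β) := by
    have h2d : (8:ℝ) - 6 * β = 2 * d := by rw [hd]; ring
    rw [h2d]
    have htsum : t * l.sum ≤ t := by
      calc t * l.sum ≤ t * 1 := mul_le_mul_of_nonneg_left hsum ht0
        _ = t := mul_one t
    have hbonus : 2 * (L:ℝ) + (S:ℝ) * β ≤ 2 + β := by
      interval_cases L
      · have hS3 : S ≤ 3 := by omega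
        have hS3' : (S:ℝ) ≤ 3 := by exact_mod_cast hS3
        push_cast
        nlinarith [mul_nonneg (by linarith : (0:ℝ) ≤ 3 - (S:ℝ)) hβ0]
      · have hS1 : S ≤ 1 := by omega
        have hS1' : (S:ℝ) ≤ 1 := by exact_mod_cast hS1
        push_cast
        nlinarith [mul_nonneg (by linarith : (0:ℝ) ≤ 1 - (S:ℝ)) hβ0]
    have hdd : d ≠ 0 := ne_of_gt hd0
    have hexp : t + (L:ℝ) * (1/d) + (S:ℝ) * (β/(2*d))
        = (2 * (6 - 6 * β) + 2 * (L:ℝ) + (S:ℝ) * β) / (2*d) := by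
      rw [ht]; field_simp
    have hgoal : t + (L:ℝ) * (1/d) + (S:ℝ) * (β/(2*d)) ≤ (14 - 11 * β) / (2*d) := by
      rw [hexp]
      gcongr
      linarith
    linarith
  linarith
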